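/- arXiv:2209.07374 — 3 statements merged into one kernel-verified Lean document; each statement's English description precedes it below -/
import Mathlib

section
/- Let Ω be a p×p symmetric positive definite matrix with spectral decomposition Ω = O Λ Oᵀ, eigenvalues λ₁,…,λ_p and orthonormal eigenvectors v₁,…,v_p. For z ∈ ℝᵖ with ‖z‖ = 1, write z = Σⱼ αⱼ vⱼ. Then ‖Ω² z zᵀ − Ω‖_F² = Σᵢ λᵢ² + Σᵢ αᵢ² (λᵢ⁴ − 2λᵢ³). -/
open Matrix Finset

/-- For symmetric positive definite `Ω` with orthonormal eigenvectors `v i`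
and eigenvalues `lam i`, and a unit vector `z = ∑ i, α i • v i`, one has
`‖Ω² z zᵀ − Ω‖_F² = ∑ i, lam i ^ 2 + ∑ i, α i ^ 2 * (lam i ^ 4 − 2 * lam i ^ 3)`. -/
theorem frobenius_sq_IF_unpenalised {p : ℕ} (Ω : Matrix (Fin p) (Fin p) ℝ)
    (hΩ : Ω.PosDef) (lam : Fin p → ℝ) (v : Fin p → Fin p → ℝ)
    (horth : ∀ i j, v i ⬝ᵥ v j = if i = j then (1 : ℝ) else 0)
    (heig : ∀ i, Ω.mulVec (v i) = lam i • v i)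
    (z : Fin p → ℝ) (hz : z ⬝ᵥ z = 1)
    (α : Fin p → ℝ) (hα : z = ∑ i, α i • v i) :
    (∑ i, ∑ j, ((Ω ^ 2 * vecMulVec z z - Ω) i j) ^ 2) =
      (∑ i, lam i ^ 2) + ∑ i, α i ^ 2 * (lam i ^ 4 - 2 * lam i ^ 3) := by
  set V : Matrix (Fin p) (Fin p) ℝ := of v with hV
  have hVVt : V * Vᵀ = 1 := by
    ext i j
    simpa [hV, mul_apply, dotProduct, one_apply] using horth i j
  have hVtV : Vᵀ * V = 1 := mul_eq_one_comm.mp hVVt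
  set D : Matrix (Fin p) (Fin p) ℝ := diagonal lam with hD
  have hΩV : Ω * Vᵀ = Vᵀ * D := by
    ext i j
    have := congrFun (heig j) i
    simp [mulVec, dotProduct, mul_apply] at this ⊢
    simp [hV, this, hD, diagonal, mul_comm]
  have hΩeq : Ω = Vᵀ * D * V := by
    calc Ω = Ω * (Vᵀ * V) := by rw [hVtV, mul_one]
    _ = (Ω * Vᵀ) * V := by rw [mul_assoc]
    _ = Vᵀ * D * V := by rw [hΩV]
  have hzeq : z = Vᵀ.mulVec α := by
    rw [hα]; ext j
    simp only [mulVec, dotProduct, Finset.sum_apply, Pi.smul_apply, smul_eq_mul,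
      transpose_apply]
    exact Finset.sum_congr rfl fun x _ => by rw [hV, of_apply]; ring
  have hsum : ∑ j, α j ^ 2 = 1 := by
    rw [← hz, hzeq, dotProduct_mulVec, vecMul_transpose, mulVec_mulVec, hVVt, one_mulVec]
    simp [dotProduct, sq]
  set A : Matrix (Fin p) (Fin p) ℝ := vecMulVec α α with hA
  have hW : vecMulVec z z = Vᵀ * A * V := by
    rw [hA, vecMulVec_eq Unit, vecMulVec_eq Unit, hzeq, replicateCol_mulVec, replicateRow_mulVec,
      transpose_mul, transpose_transpose, transpose_replicateCol]
    simp only [Matrix.mul_assoc]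
  have hΩ2 : Ω ^ 2 = Vᵀ * (D * D) * V := by
    rw [pow_two, hΩeq]
    calc Vᵀ * D * V * (Vᵀ * D * V) = Vᵀ * D * (V * Vᵀ) * D * V := by
          simp only [mul_assoc]
    _ = Vᵀ * (D * D) * V := by rw [hVVt]; simp only [mul_assoc, one_mul]
  set N : Matrix (Fin p) (Fin p) ℝ := D * D * A - D with hN
  have hM : Ω ^ 2 * vecMulVec z z - Ω = Vᵀ * N * V := by
    rw [hΩ2, hW, hΩeq, hN, mul_sub, sub_mul]
    congr 1
    calc Vᵀ * (D * D) * V * (Vᵀ * A * V) = Vᵀ * (D * D) * (V * Vᵀ) * A * V := by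
          simp only [mul_assoc]
    _ = Vᵀ * (D * D * A) * V := by rw [hVVt]; simp only [mul_assoc, one_mul]
  have key : ∀ M : Matrix (Fin p) (Fin p) ℝ,
      (∑ i, ∑ j, (M i j) ^ 2) = trace (Mᵀ * M) := by
    intro M
    simp only [trace, Matrix.diag, mul_apply, transpose_apply, sq]
    rw [Finset.sum_comm]
  have htr : trace ((Vᵀ * N * V)ᵀ * (Vᵀ * N * V)) = trace (Nᵀ * N) := by
    rw [transpose_mul, transpose_mul, transpose_transpose]
    simp only [Matrix.mul_assoc]
    rw [← Matrix.mul_assoc V Vᵀ, hVVt, Matrix.one_mul, trace_mul_comm]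
    simp only [Matrix.mul_assoc]
    rw [hVVt, Matrix.mul_one]
  rw [hM, key, htr, ← key]
  have hDD : D * D = diagonal (fun i => lam i ^ 2) := by
    rw [hD, diagonal_mul_diagonal]; congr 1; ext i; ring
  have hNapp : ∀ i j, N i j = lam i ^ 2 * (α i * α j) - (if i = j then lam i else 0) := by
    intro i j
    rw [hN, Matrix.sub_apply, hDD, diagonal_mul, hA, vecMulVec_apply, hD, diagonal_apply]
  have inner : ∀ i, ∑ j, (N i j) ^ 2 = lam i ^ 4 * α i ^ 2 - 2 * lam i ^ 3 * α i ^ 2 + lam i ^ 2 := by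
    intro i
    have step : ∀ j, (N i j) ^ 2
        = lam i ^ 4 * α i ^ 2 * (α j ^ 2) + (if j = i then (-(2 * lam i ^ 3 * α i ^ 2) + lam i ^ 2) else 0) := by
      intro j
      rw [hNapp]
      by_cases h : j = i
      · subst h; simp; ring
      · rw [if_neg (Ne.symm h), if_neg h]; ring
    rw [Finset.sum_congr rfl fun j _ => step j, Finset.sum_add_distrib, ← Finset.mul_sum, hsum]
    simp only [Finset.sum_ite_eq', Finset.mem_univ, if_true]
    ring
  rw [Finset.sum_congr rfl fun i _ => inner i]
  rw [Finset.sum_add_distrib, Finset.sum_sub_distrib]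
  rw [Finset.sum_congr rfl (fun i (_ : i ∈ univ) => show α i ^ 2 * (lam i ^ 4 - 2 * lam i ^ 3)
    = lam i ^ 4 * α i ^ 2 - 2 * lam i ^ 3 * α i ^ 2 by ring), Finset.sum_sub_distrib]
  ring
end

section
/- Let Ω be a p×p symmetric positive definite matrix with eigenvalues λ₁ ≥ ⋯ ≥ λ_p and g(x) = x⁴ − 2x³. Then max over unit vectors z of ‖Ω² z zᵀ − Ω‖_F² equals Σᵢ λᵢ² + max(g(λ₁), g(λ_p)), and the maximum is attained at the eigenvector v₁ if g(λ₁) ≥ g(λ_p), and at v_p otherwise. -/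
open Matrix Finset

section
variable {n : ℕ}

lemma hos (v : Fin (n + 1) → Fin (n + 1) → ℝ)
    (horth : ∀ i j, v i ⬝ᵥ v j = if i = j then (1 : ℝ) else 0) (a b : Fin (n+1) → ℝ) :
    (∑ i, (∑ k, a k * v k i) * (∑ k, b k * v k i)) = ∑ k, a k * b k := by
  have h1 : ∀ i : Fin (n+1), (∑ k, a k * v k i) * (∑ k, b k * v k i)
      = ∑ k, ∑ l, (a k * b l) * (v k i * v l i) := by
    intro i
    rw [Finset.sum_mul_sum]
    exact Finset.sum_congr rfl fun k _ => Finset.sum_congr rfl fun l _ => by ring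
  calc (∑ i, (∑ k, a k * v k i) * (∑ k, b k * v k i))
      = ∑ i, ∑ k, ∑ l, (a k * b l) * (v k i * v l i) :=
        Finset.sum_congr rfl fun i _ => h1 i
    _ = ∑ k, ∑ l, ∑ i : Fin (n+1), (a k * b l) * (v k i * v l i) := by
        rw [Finset.sum_comm]
        exact Finset.sum_congr rfl fun k _ => Finset.sum_comm
    _ = ∑ k, ∑ l, (a k * b l) * (v k ⬝ᵥ v l) := by
        simp [dotProduct, Finset.mul_sum]
    _ = ∑ k, a k * b k := by
        simp [horth, mul_ite, Finset.sum_ite_eq]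

lemma hcomp (v : Fin (n + 1) → Fin (n + 1) → ℝ)
    (horth : ∀ i j, v i ⬝ᵥ v j = if i = j then (1 : ℝ) else 0) (i j : Fin (n+1)) :
    (∑ k, v k i * v k j) = if i = j then (1:ℝ) else 0 := by
  have h1 : (Matrix.of v) * (Matrix.of v)ᵀ = 1 := by
    ext a b
    simpa [Matrix.mul_apply, Matrix.one_apply, dotProduct] using horth a b
  have h2 := mul_eq_one_comm.mp h1
  have := congrFun (congrFun h2 i) j
  simpa [Matrix.mul_apply, Matrix.one_apply] using this

lemma hzexp (v : Fin (n + 1) → Fin (n + 1) → ℝ)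
    (horth : ∀ i j, v i ⬝ᵥ v j = if i = j then (1 : ℝ) else 0)
    (z : Fin (n+1) → ℝ) (i : Fin (n+1)) : z i = ∑ k, (v k ⬝ᵥ z) * v k i := by
  calc z i = ∑ j, (if i = j then (1:ℝ) else 0) * z j := by simp
    _ = ∑ j, (∑ k, v k i * v k j) * z j :=
        Finset.sum_congr rfl fun j _ => by rw [hcomp v horth]
    _ = ∑ j, ∑ k, v k i * v k j * z j :=
        Finset.sum_congr rfl fun j _ => Finset.sum_mul ..
    _ = ∑ k, ∑ j, v k i * v k j * z j := Finset.sum_comm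
    _ = ∑ k, (v k ⬝ᵥ z) * v k i := by
        refine Finset.sum_congr rfl fun k _ => ?_
        rw [dotProduct, Finset.sum_mul]
        exact Finset.sum_congr rfl fun j _ => by ring
end

section
variable {n : ℕ} (Ω : Matrix (Fin (n + 1)) (Fin (n + 1)) ℝ)
  (lam : Fin (n + 1) → ℝ) (v : Fin (n + 1) → Fin (n + 1) → ℝ)

lemma hOmz (horth : ∀ i j, v i ⬝ᵥ v j = if i = j then (1 : ℝ) else 0)
    (heig : ∀ i, Ω.mulVec (v i) = lam i • v i) (z : Fin (n+1) → ℝ) (i : Fin (n+1)) :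
    (∑ j, Ω i j * z j) = ∑ k, (lam k * (v k ⬝ᵥ z)) * v k i := by
  have hΩv : ∀ k (i : Fin (n+1)), (∑ j, Ω i j * v k j) = lam k * v k i := by
    intro k i
    have := congrFun (heig k) i
    simpa [Matrix.mulVec, dotProduct] using this
  calc (∑ j, Ω i j * z j)
      = ∑ j, Ω i j * ∑ k, (v k ⬝ᵥ z) * v k j :=
        Finset.sum_congr rfl fun j _ => by rw [← hzexp v horth]
    _ = ∑ j, ∑ k, (v k ⬝ᵥ z) * (Ω i j * v k j) := by
        refine Finset.sum_congr rfl fun j _ => ?_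
        rw [Finset.mul_sum]
        exact Finset.sum_congr rfl fun k _ => by ring
    _ = ∑ k, (v k ⬝ᵥ z) * ∑ j, Ω i j * v k j := by
        rw [Finset.sum_comm]
        exact Finset.sum_congr rfl fun k _ => (Finset.mul_sum ..).symm
    _ = ∑ k, (lam k * (v k ⬝ᵥ z)) * v k i := by
        refine Finset.sum_congr rfl fun k _ => ?_
        rw [hΩv]; ring

lemma hvd (horth : ∀ i j, v i ⬝ᵥ v j = if i = j then (1 : ℝ) else 0)
    (d : Fin (n+1) → ℝ) (k : Fin (n+1)) :
    (∑ m, v k m * (∑ l, d l * v l m)) = d k := by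
  calc (∑ m, v k m * (∑ l, d l * v l m))
      = ∑ m, ∑ l, d l * (v k m * v l m) := by
        refine Finset.sum_congr rfl fun m _ => ?_
        rw [Finset.mul_sum]
        exact Finset.sum_congr rfl fun l _ => by ring
    _ = ∑ l, d l * (v k ⬝ᵥ v l) := by
        rw [Finset.sum_comm]
        exact Finset.sum_congr rfl fun l _ => by
          rw [dotProduct, Finset.mul_sum]
    _ = d k := by simp [horth, mul_ite, Finset.sum_ite_eq]

lemma hOm2z (horth : ∀ i j, v i ⬝ᵥ v j = if i = j then (1 : ℝ) else 0)
    (heig : ∀ i, Ω.mulVec (v i) = lam i • v i) (z : Fin (n+1) → ℝ) (i : Fin (n+1)) :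
    (∑ l, (Ω^2) i l * z l) = ∑ k, (lam k^2 * (v k ⬝ᵥ z)) * v k i := by
  have hstep : (∑ l, (Ω^2) i l * z l) = ∑ m, Ω i m * (Ω.mulVec z m) := by
    calc (∑ l, (Ω^2) i l * z l)
        = ∑ l, (∑ m, Ω i m * Ω m l) * z l := by
          refine Finset.sum_congr rfl fun l _ => ?_
          rw [pow_two, Matrix.mul_apply]
      _ = ∑ l, ∑ m, Ω i m * (Ω m l * z l) := by
          refine Finset.sum_congr rfl fun l _ => ?_
          rw [Finset.sum_mul]
          exact Finset.sum_congr rfl fun m _ => by ring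
      _ = ∑ m, Ω i m * (Ω.mulVec z m) := by
          rw [Finset.sum_comm]
          refine Finset.sum_congr rfl fun m _ => ?_
          simp [Matrix.mulVec, dotProduct, Finset.mul_sum]
  rw [hstep, hOmz Ω lam v horth heig (Ω.mulVec z) i]
  refine Finset.sum_congr rfl fun k _ => ?_
  have hcy : v k ⬝ᵥ (Ω.mulVec z) = lam k * (v k ⬝ᵥ z) := by
    have h1 : ∀ m, Ω.mulVec z m = ∑ l, (lam l * (v l ⬝ᵥ z)) * v l m := by
      intro m
      rw [← hOmz Ω lam v horth heig z m]
      rfl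
    calc v k ⬝ᵥ (Ω.mulVec z) = ∑ m, v k m * (∑ l, (lam l * (v l ⬝ᵥ z)) * v l m) := by
          rw [dotProduct]
          exact Finset.sum_congr rfl fun m _ => by rw [h1]
      _ = lam k * (v k ⬝ᵥ z) := hvd v horth _ k
  rw [hcy]; ring

lemma hOmentry (horth : ∀ i j, v i ⬝ᵥ v j = if i = j then (1 : ℝ) else 0)
    (heig : ∀ i, Ω.mulVec (v i) = lam i • v i) (i j : Fin (n+1)) :
    Ω i j = ∑ k, (lam k * v k i) * v k j := by
  have h := hOmz Ω lam v horth heig (fun l => if l = j then (1:ℝ) else 0) i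
  simp only [mul_ite, mul_one, mul_zero, Finset.sum_ite_eq', Finset.mem_univ, if_true] at h
  rw [h]
  refine Finset.sum_congr rfl fun k _ => ?_
  have : v k ⬝ᵥ (fun l => if l = j then (1:ℝ) else 0) = v k j := by
    simp [dotProduct]
  rw [this]; ring
end

lemma hFrob {n : ℕ} (Ω : Matrix (Fin (n + 1)) (Fin (n + 1)) ℝ)
    (lam : Fin (n + 1) → ℝ) (v : Fin (n + 1) → Fin (n + 1) → ℝ)
    (horth : ∀ i j, v i ⬝ᵥ v j = if i = j then (1 : ℝ) else 0)
    (heig : ∀ i, Ω.mulVec (v i) = lam i • v i) (z : Fin (n+1) → ℝ) :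
    (∑ i, ∑ j, ((Ω ^ 2 * vecMulVec z z - Ω) i j) ^ 2)
      = (∑ k, lam k^4 * (v k ⬝ᵥ z)^2) * (∑ k, (v k ⬝ᵥ z)^2)
        - 2 * (∑ k, lam k^3 * (v k ⬝ᵥ z)^2) + ∑ k, lam k^2 := by
  set W : Fin (n+1) → ℝ := fun i => ∑ k, (lam k^2 * (v k ⬝ᵥ z)) * v k i with hW
  set U : Fin (n+1) → ℝ := fun i => ∑ k, (lam k * (v k ⬝ᵥ z)) * v k i with hU
  have hA : ∀ i j, (Ω ^ 2 * vecMulVec z z - Ω) i j = W i * z j - Ω i j := by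
    intro i j
    rw [Matrix.sub_apply, Matrix.mul_apply]
    congr 1
    calc (∑ l, (Ω^2) i l * vecMulVec z z l j)
        = ∑ l, ((Ω^2) i l * z l) * z j :=
          Finset.sum_congr rfl fun l _ => by rw [Matrix.vecMulVec_apply]; ring
      _ = (∑ l, (Ω^2) i l * z l) * z j := (Finset.sum_mul ..).symm
      _ = W i * z j := by rw [hOm2z Ω lam v horth heig z i]
  have e1 : (∑ i, W i * W i) = ∑ k, (lam k^2 * (v k ⬝ᵥ z)) * (lam k^2 * (v k ⬝ᵥ z)) :=
    hos v horth _ _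
  have e2 : (∑ j, z j * z j) = ∑ k, (v k ⬝ᵥ z) * (v k ⬝ᵥ z) := by
    calc (∑ j, z j * z j)
        = ∑ j, (∑ k, (v k ⬝ᵥ z) * v k j) * (∑ k, (v k ⬝ᵥ z) * v k j) :=
          Finset.sum_congr rfl fun j _ => by rw [← hzexp v horth]
      _ = ∑ k, (v k ⬝ᵥ z) * (v k ⬝ᵥ z) := hos v horth _ _
  have e3 : (∑ i, W i * U i) = ∑ k, (lam k^2 * (v k ⬝ᵥ z)) * (lam k * (v k ⬝ᵥ z)) :=
    hos v horth _ _
  have e4 : (∑ i, ∑ j, Ω i j ^ 2) = ∑ k, lam k ^2 := by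
    have h1 : ∀ i, (∑ j, Ω i j ^ 2) = ∑ k, (lam k * v k i) * (lam k * v k i) := by
      intro i
      calc (∑ j, Ω i j ^ 2)
          = ∑ j, (∑ k, (lam k * v k i) * v k j) * (∑ k, (lam k * v k i) * v k j) :=
            Finset.sum_congr rfl fun j _ => by rw [← hOmentry Ω lam v horth heig]; ring
        _ = ∑ k, (lam k * v k i) * (lam k * v k i) := hos v horth _ _
    calc (∑ i, ∑ j, Ω i j ^ 2)
        = ∑ i, ∑ k, (lam k * v k i) * (lam k * v k i) :=
          Finset.sum_congr rfl fun i _ => h1 i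
      _ = ∑ k, ∑ i, (lam k * v k i) * (lam k * v k i) := Finset.sum_comm
      _ = ∑ k, lam k^2 * (v k ⬝ᵥ v k) := by
          refine Finset.sum_congr rfl fun k _ => ?_
          rw [dotProduct, Finset.mul_sum]
          exact Finset.sum_congr rfl fun i _ => by ring
      _ = ∑ k, lam k ^2 := by simp [horth]
  calc (∑ i, ∑ j, ((Ω ^ 2 * vecMulVec z z - Ω) i j) ^ 2)
      = ∑ i, ∑ j, (W i * z j - Ω i j)^2 :=
        Finset.sum_congr rfl fun i _ => Finset.sum_congr rfl fun j _ => by rw [hA]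
    _ = ∑ i, ∑ j, ((W i * W i) * (z j * z j) - 2 * (W i * (Ω i j * z j)) + Ω i j ^ 2) :=
        Finset.sum_congr rfl fun i _ => Finset.sum_congr rfl fun j _ => by ring
    _ = ∑ i, ((W i * W i) * (∑ j, z j * z j) - 2 * (W i * (∑ j, Ω i j * z j)) + ∑ j, Ω i j ^ 2) := by
        refine Finset.sum_congr rfl fun i _ => ?_
        rw [Finset.sum_add_distrib, Finset.sum_sub_distrib, ← Finset.mul_sum, ← Finset.mul_sum,
          ← Finset.mul_sum]
    _ = ∑ i, ((W i * W i) * (∑ j, z j * z j) - 2 * (W i * U i) + ∑ j, Ω i j ^ 2) := by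
        refine Finset.sum_congr rfl fun i _ => ?_
        rw [hOmz Ω lam v horth heig z i]
    _ = (∑ i, W i * W i) * (∑ j, z j * z j) - 2 * (∑ i, W i * U i) + ∑ i, ∑ j, Ω i j ^ 2 := by
        rw [Finset.sum_add_distrib, Finset.sum_sub_distrib, ← Finset.sum_mul, ← Finset.mul_sum]
    _ = (∑ k, lam k^4 * (v k ⬝ᵥ z)^2) * (∑ k, (v k ⬝ᵥ z)^2)
        - 2 * (∑ k, lam k^3 * (v k ⬝ᵥ z)^2) + ∑ k, lam k^2 := by
        rw [e1, e2, e3, e4]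
        congr 1
        · congr 1
          · congr 1
            · exact Finset.sum_congr rfl fun k _ => by ring
            · exact Finset.sum_congr rfl fun k _ => by ring
          · rw [Finset.mul_sum, Finset.mul_sum]
            exact Finset.sum_congr rfl fun k _ => by ring

lemma hnormlem {n : ℕ} (v : Fin (n + 1) → Fin (n + 1) → ℝ)
    (horth : ∀ i j, v i ⬝ᵥ v j = if i = j then (1 : ℝ) else 0) (z : Fin (n+1) → ℝ) :
    (∑ k, (v k ⬝ᵥ z)^2) = z ⬝ᵥ z := by
  have e2 : (∑ j, z j * z j) = ∑ k, (v k ⬝ᵥ z) * (v k ⬝ᵥ z) := by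
    calc (∑ j, z j * z j)
        = ∑ j, (∑ k, (v k ⬝ᵥ z) * v k j) * (∑ k, (v k ⬝ᵥ z) * v k j) :=
          Finset.sum_congr rfl fun j _ => by rw [← hzexp v horth]
      _ = ∑ k, (v k ⬝ᵥ z) * (v k ⬝ᵥ z) := hos v horth _ _
  calc (∑ k, (v k ⬝ᵥ z)^2) = ∑ k, (v k ⬝ᵥ z) * (v k ⬝ᵥ z) :=
        Finset.sum_congr rfl fun k _ => sq (v k ⬝ᵥ z) ▸ by ring
    _ = ∑ j, z j * z j := e2.symm
    _ = z ⬝ᵥ z := rfl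


/-- For symmetric positive definite `Ω` with decreasing eigenvalues `lam` and
orthonormal eigenvectors `v`, and `g x = x⁴ − 2x³`, the maximum over unit
vectors `z` of `‖Ω² z zᵀ − Ω‖_F²` is `∑ i, lam i ^ 2 + max (g lam₁) (g lam_p)`,
attained at `v 0` if `g lam₁ ≥ g lam_p` and at `v (Fin.last n)` otherwise. -/
theorem max_frobenius_sq_IF {n : ℕ} (Ω : Matrix (Fin (n + 1)) (Fin (n + 1)) ℝ)
    (hΩ : Ω.PosDef) (lam : Fin (n + 1) → ℝ) (hdec : Antitone lam)
    (v : Fin (n + 1) → Fin (n + 1) → ℝ)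
    (horth : ∀ i j, v i ⬝ᵥ v j = if i = j then (1 : ℝ) else 0)
    (heig : ∀ i, Ω.mulVec (v i) = lam i • v i)
    (g : ℝ → ℝ) (hg : ∀ x, g x = x ^ 4 - 2 * x ^ 3) :
    IsGreatest
      {c : ℝ | ∃ z : Fin (n + 1) → ℝ, z ⬝ᵥ z = 1 ∧
        c = ∑ i, ∑ j, ((Ω ^ 2 * vecMulVec z z - Ω) i j) ^ 2}
      ((∑ i, lam i ^ 2) + max (g (lam 0)) (g (lam (Fin.last n)))) ∧
    (g (lam 0) ≥ g (lam (Fin.last n)) →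
      (∑ i, ∑ j, ((Ω ^ 2 * vecMulVec (v 0) (v 0) - Ω) i j) ^ 2) =
        (∑ i, lam i ^ 2) + max (g (lam 0)) (g (lam (Fin.last n)))) ∧
    (g (lam 0) < g (lam (Fin.last n)) →
      (∑ i, ∑ j, ((Ω ^ 2 * vecMulVec (v (Fin.last n)) (v (Fin.last n)) - Ω) i j) ^ 2) =
        (∑ i, lam i ^ 2) + max (g (lam 0)) (g (lam (Fin.last n)))) := by
  -- value of F at a unit vector z
  have hFg : ∀ z : Fin (n+1) → ℝ, z ⬝ᵥ z = 1 →
      (∑ i, ∑ j, ((Ω ^ 2 * vecMulVec z z - Ω) i j) ^ 2)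
        = (∑ k, lam k ^ 2) + ∑ k, (v k ⬝ᵥ z)^2 * g (lam k) := by
    intro z hz
    rw [hFrob Ω lam v horth heig z, hnormlem v horth z, hz, mul_one]
    have h : (∑ k, (v k ⬝ᵥ z)^2 * g (lam k))
        = (∑ k, lam k^4 * (v k ⬝ᵥ z)^2) - ∑ k, 2 * (lam k^3 * (v k ⬝ᵥ z)^2) := by
      rw [← Finset.sum_sub_distrib]
      exact Finset.sum_congr rfl fun k _ => by rw [hg]; ring
    rw [h, ← Finset.mul_sum]
    ring
  -- value of F at an eigenvector
  have hFv : ∀ j : Fin (n+1),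
      (∑ i, ∑ j', ((Ω ^ 2 * vecMulVec (v j) (v j) - Ω) i j') ^ 2)
        = (∑ k, lam k ^ 2) + g (lam j) := by
    intro j
    rw [hFg (v j) (by simpa using horth j j)]
    congr 1
    have h : ∀ k, (v k ⬝ᵥ v j)^2 * g (lam k) = if k = j then g (lam k) else 0 := by
      intro k
      rw [horth]
      split <;> simp
    rw [Finset.sum_congr rfl fun k _ => h k]
    simp
  -- quasiconvexity bound
  have hgmax : ∀ k, g (lam k) ≤ max (g (lam 0)) (g (lam (Fin.last n))) := by
    intro k
    have h1 : lam k ≤ lam 0 := hdec (Fin.zero_le k)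
    have h2 : lam (Fin.last n) ≤ lam k := hdec (Fin.le_last k)
    rcases le_total (lam k) (3/2) with h | h
    · refine le_trans ?_ (le_max_right _ _)
      rw [hg, hg]
      nlinarith [mul_nonneg (sub_nonneg.2 h2) (sub_nonneg.2 h), sq_nonneg (lam k - lam (Fin.last n)),
        sq_nonneg (lam k + lam (Fin.last n)),
        mul_nonneg (mul_nonneg (sub_nonneg.2 h2) (sub_nonneg.2 h)) (sq_nonneg (lam k)),
        mul_nonneg (mul_nonneg (sub_nonneg.2 h2) (sub_nonneg.2 h)) (sq_nonneg (lam (Fin.last n))),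
        mul_nonneg (mul_nonneg (sub_nonneg.2 h2) (sub_nonneg.2 h)) (sq_nonneg (lam k + lam (Fin.last n)))]
    · refine le_trans ?_ (le_max_left _ _)
      rw [hg, hg]
      nlinarith [mul_nonneg (sub_nonneg.2 h1) (sub_nonneg.2 h), sq_nonneg (lam k - lam 0),
        sq_nonneg (lam k + lam 0),
        mul_nonneg (mul_nonneg (sub_nonneg.2 h1) (sub_nonneg.2 h)) (sq_nonneg (lam k)),
        mul_nonneg (mul_nonneg (sub_nonneg.2 h1) (sub_nonneg.2 h)) (sq_nonneg (lam 0)),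
        mul_nonneg (mul_nonneg (sub_nonneg.2 h1) (sub_nonneg.2 h)) (sq_nonneg (lam k + lam 0))]
  refine ⟨⟨?_, ?_⟩, ?_, ?_⟩
  · -- membership
    by_cases hc : g (lam (Fin.last n)) ≤ g (lam 0)
    · exact ⟨v 0, by simpa using horth 0 0, by rw [hFv 0, max_eq_left hc]⟩
    · exact ⟨v (Fin.last n), by simpa using horth (Fin.last n) (Fin.last n),
        by rw [hFv (Fin.last n), max_eq_right (le_of_not_ge hc)]⟩
  · -- upper bound
    rintro x ⟨z, hz1, rfl⟩
    rw [hFg z hz1]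
    refine add_le_add_right ?_ _
    calc (∑ k, (v k ⬝ᵥ z)^2 * g (lam k))
        ≤ ∑ k, (v k ⬝ᵥ z)^2 * max (g (lam 0)) (g (lam (Fin.last n))) :=
          Finset.sum_le_sum fun k _ => mul_le_mul_of_nonneg_left (hgmax k) (sq_nonneg _)
      _ = (∑ k, (v k ⬝ᵥ z)^2) * max (g (lam 0)) (g (lam (Fin.last n))) := (Finset.sum_mul ..).symm
      _ = max (g (lam 0)) (g (lam (Fin.last n))) := by
          rw [hnormlem v horth z, hz1, one_mul]
  · intro hc
    rw [hFv 0, max_eq_left hc]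
  · intro hc
    rw [hFv (Fin.last n), max_eq_right (le_of_lt hc)]
end

section
/- Let A_m = [[A₁₁, A₁₂],[A₂₁, H_m]] be a sequence of symmetric positive definite block matrices where the blocks A₁₁, A₁₂, A₂₁ are fixed and H_m is a sequence of diagonal matrices whose diagonal entries all diverge to +∞. Then A_m⁻¹ converges to the block matrix [[A₁₁⁻¹, 0],[0, 0]], provided A₁₁ is invertible. -/
open Matrix Filter

/-- A coercivity bound on a real matrix gives invertibility and an entrywise
bound on the inverse. -/
lemma aux_inv_entry_bound {t : ℕ} (S : Matrix (Fin t) (Fin t) ℝ) {c : ℝ} (hc : 0 < c)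
    (hq : ∀ x : Fin t → ℝ, c * (∑ j, x j ^ 2) ≤ x ⬝ᵥ (S *ᵥ x)) :
    IsUnit S.det ∧ ∀ q r, |S⁻¹ q r| ≤ 1 / c := by
  have hdet : S.det ≠ 0 := by
    intro h0
    obtain ⟨v, hv, hSv⟩ := (Matrix.exists_mulVec_eq_zero_iff).mpr h0
    have := hq v
    rw [hSv, dotProduct_zero] at this
    have hsum : (∑ j, v j ^ 2) ≤ 0 := by
      nlinarith
    have hsum0 : (∑ j, v j ^ 2) = 0 :=
      le_antisymm hsum (Finset.sum_nonneg fun j _ => sq_nonneg _)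
    apply hv
    funext j
    have := (Finset.sum_eq_zero_iff_of_nonneg (fun j _ => sq_nonneg (v j))).mp hsum0 j
      (Finset.mem_univ j)
    have := sq_eq_zero_iff.mp this
    simpa using this
  have hunit : IsUnit S.det := isUnit_iff_ne_zero.mpr hdet
  refine ⟨hunit, fun q r => ?_⟩
  set z : Fin t → ℝ := S⁻¹ *ᵥ Pi.single r 1 with hz
  have hSz : S *ᵥ z = Pi.single r 1 := by
    rw [hz, Matrix.mulVec_mulVec, Matrix.mul_nonsing_inv _ hunit, Matrix.one_mulVec]
  have hzr : z ⬝ᵥ (S *ᵥ z) = z r := by rw [hSz, dotProduct_single, mul_one]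
  set Sq : ℝ := ∑ j, z j ^ 2 with hSqdef
  have h1 : c * Sq ≤ z r := by rw [← hzr]; exact hq z
  have hSqnn : 0 ≤ Sq := Finset.sum_nonneg fun j _ => sq_nonneg _
  have h2 : (z r) ^ 2 ≤ Sq :=
    Finset.single_le_sum (f := fun j => z j ^ 2) (fun j _ => sq_nonneg _) (Finset.mem_univ r)
  have h3 : (z q) ^ 2 ≤ Sq :=
    Finset.single_le_sum (f := fun j => z j ^ 2) (fun j _ => sq_nonneg _) (Finset.mem_univ q)
  have hSqle : Sq ≤ 1 / c ^ 2 := by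
    rcases eq_or_lt_of_le hSqnn with h | h
    · rw [← h]; positivity
    · have hzr0 : 0 < z r := lt_of_lt_of_le (mul_pos hc h) h1
      have hmul : (c * Sq) * (c * Sq) ≤ z r * z r :=
        mul_le_mul h1 h1 (le_of_lt (mul_pos hc h)) (le_of_lt hzr0)
      have h5 : c ^ 2 * Sq ≤ 1 := by nlinarith
      rw [le_div_iff₀ (by positivity)]
      linarith [h5]
  have hzq : |z q| ≤ 1 / c := by
    have hsq : (z q) ^ 2 ≤ (1 / c) ^ 2 := by
      calc (z q) ^ 2 ≤ Sq := h3
        _ ≤ 1 / c ^ 2 := hSqle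
        _ = (1 / c) ^ 2 := by ring
    exact abs_le.mpr (abs_le_of_sq_le_sq' hsq (by positivity))
  have : z q = S⁻¹ q r := by
    rw [hz, Matrix.mulVec_single]
    simp
  rwa [← this]

/-- Quadratic-form lower bound for `D - K` when `D` is diagonal with large
diagonal entries. -/
lemma aux_quad_bound {t : ℕ} (D K : Matrix (Fin t) (Fin t) ℝ) (hD : D.IsDiag)
    {d : ℝ} (hd : ∀ j, (∑ i, ∑ j, |K i j|) + d ≤ D j j) (x : Fin t → ℝ) :
    d * (∑ j, x j ^ 2) ≤ x ⬝ᵥ ((D - K) *ᵥ x) := by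
  set B : ℝ := ∑ i, ∑ j, |K i j| with hB
  have hxk : ∀ k, x k ^ 2 ≤ ∑ j, x j ^ 2 := fun k =>
    Finset.single_le_sum (f := fun j => x j ^ 2) (fun j _ => sq_nonneg _) (Finset.mem_univ k)
  have hsumnn : 0 ≤ ∑ j, x j ^ 2 := Finset.sum_nonneg fun j _ => sq_nonneg _
  have hdot : x ⬝ᵥ ((D - K) *ᵥ x) = x ⬝ᵥ (D *ᵥ x) - x ⬝ᵥ (K *ᵥ x) := by
    rw [Matrix.sub_mulVec, dotProduct_sub]
  have hDx : x ⬝ᵥ (D *ᵥ x) = ∑ i, D i i * x i ^ 2 := by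
    simp only [dotProduct, Matrix.mulVec, dotProduct]
    refine Finset.sum_congr rfl fun i _ => ?_
    rw [Finset.sum_eq_single i (fun j _ hji => by rw [hD hji.symm, zero_mul])
      (fun h => absurd (Finset.mem_univ i) h)]
    ring
  have hKx : x ⬝ᵥ (K *ᵥ x) ≤ B * ∑ j, x j ^ 2 := by
    have : x ⬝ᵥ (K *ᵥ x) = ∑ i, ∑ j, x i * (K i j * x j) := by
      simp only [dotProduct, Matrix.mulVec, dotProduct, Finset.mul_sum]
    rw [this, hB, Finset.sum_mul]
    refine Finset.sum_le_sum fun i _ => ?_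
    rw [Finset.sum_mul]
    refine Finset.sum_le_sum fun j _ => ?_
    have h1 : x i * (K i j * x j) ≤ |K i j| * |x i * x j| := by
      calc x i * (K i j * x j) ≤ |x i * (K i j * x j)| := le_abs_self _
        _ = |K i j * (x i * x j)| := by congr 1; ring
        _ = |K i j| * |x i * x j| := abs_mul _ _
    have h2 : |x i * x j| ≤ ∑ k, x k ^ 2 := by
      rw [abs_le]
      constructor <;> nlinarith [hxk i, hxk j, sq_nonneg (x i - x j), sq_nonneg (x i + x j)]
    calc x i * (K i j * x j) ≤ |K i j| * |x i * x j| := h1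
      _ ≤ |K i j| * ∑ k, x k ^ 2 := by
          exact mul_le_mul_of_nonneg_left h2 (abs_nonneg _)
  have hDlow : (B + d) * (∑ j, x j ^ 2) ≤ ∑ i, D i i * x i ^ 2 := by
    rw [Finset.mul_sum]
    exact Finset.sum_le_sum fun i _ => mul_le_mul_of_nonneg_right (hd i) (sq_nonneg _)
  rw [hdot, hDx]
  nlinarith

/-- If `A_m = [[A₁₁, A₁₂],[A₂₁, H m]]` is a sequence of symmetric positive
definite block matrices with fixed blocks `A₁₁` (invertible), `A₁₂ = A₂₁ᵀ`,
and `H m` diagonal with all diagonal entries diverging to `+∞`, then `A_m⁻¹`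
converges entrywise to `[[A₁₁⁻¹, 0],[0, 0]]`. -/
theorem inv_fromBlocks_tendsto {s t : ℕ}
    (A11 : Matrix (Fin s) (Fin s) ℝ) (A12 : Matrix (Fin s) (Fin t) ℝ)
    (A21 : Matrix (Fin t) (Fin s) ℝ) (H : ℕ → Matrix (Fin t) (Fin t) ℝ)
    (h11 : IsUnit A11.det) (hsym : A12 = A21ᵀ)
    (hdiag : ∀ m, (H m).IsDiag)
    (hdiv : ∀ j, Tendsto (fun m => H m j j) atTop atTop)
    (hpd : ∀ m, (Matrix.fromBlocks A11 A12 A21 (H m)).PosDef) :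
    ∀ q r, Tendsto (fun m => ((Matrix.fromBlocks A11 A12 A21 (H m))⁻¹) q r)
      atTop (nhds ((Matrix.fromBlocks A11⁻¹ 0 0 0) q r)) := by
  classical
  set K : Matrix (Fin t) (Fin t) ℝ := A21 * A11⁻¹ * A12 with hK
  set B : ℝ := ∑ i, ∑ j, |K i j| with hB
  set Sm : ℕ → Matrix (Fin t) (Fin t) ℝ := fun m => H m - K with hSm
  -- entrywise convergence of (Sm m)⁻¹ to 0
  have hSinv : ∀ i j : Fin t, Tendsto (fun m => (Sm m)⁻¹ i j) atTop (nhds 0) := by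
    intro i j
    rw [NormedAddCommGroup.tendsto_nhds_zero]
    intro ε hε
    have hev : ∀ᶠ m in atTop, ∀ k, B + max 1 (2 / ε) ≤ H m k k := by
      rw [eventually_all]
      intro k
      exact (hdiv k).eventually_ge_atTop _
    filter_upwards [hev] with m hm
    have hd : 0 < max 1 (2 / ε) := lt_of_lt_of_le one_pos (le_max_left _ _)
    have hbound := (aux_inv_entry_bound (Sm m) hd
      (aux_quad_bound (H m) K (hdiag m) hm)).2 i j
    have h2e : 1 / max 1 (2 / ε) ≤ ε / 2 := by
      rw [div_le_iff₀ hd]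
      calc (1 : ℝ) = (ε / 2) * (2 / ε) := by field_simp
        _ ≤ (ε / 2) * max 1 (2 / ε) := by
            exact mul_le_mul_of_nonneg_left (le_max_right _ _) (by positivity)
    calc ‖(Sm m)⁻¹ i j‖ ≤ 1 / max 1 (2 / ε) := hbound
      _ ≤ ε / 2 := h2e
      _ < ε := by linarith
  -- matrix-level convergence
  have hSinvM : Tendsto (fun m => (Sm m)⁻¹) atTop (nhds 0) := by
    refine tendsto_pi_nhds.mpr ?_
    intro i
    rw [tendsto_pi_nhds]
    intro j
    simpa using hSinv i j
  -- the continuous block formula map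
  set f : Matrix (Fin t) (Fin t) ℝ → Matrix (Fin s ⊕ Fin t) (Fin s ⊕ Fin t) ℝ := fun X =>
    Matrix.fromBlocks (A11⁻¹ + A11⁻¹ * A12 * X * A21 * A11⁻¹) (-(A11⁻¹ * A12 * X))
      (-(X * A21 * A11⁻¹)) X with hf
  have hfc : Continuous f := by
    apply Continuous.matrix_fromBlocks
    · exact (continuous_const.add ((((continuous_const.matrix_mul
        continuous_id).matrix_mul continuous_const)).matrix_mul continuous_const))
    · exact ((continuous_const.matrix_mul continuous_id)).neg
    · exact ((continuous_id.matrix_mul continuous_const).matrix_mul continuous_const).neg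
    · exact continuous_id
  have hflim : Tendsto (fun m => f ((Sm m)⁻¹)) atTop (nhds (f 0)) :=
    (hfc.tendsto 0).comp hSinvM
  have hf0 : f 0 = Matrix.fromBlocks A11⁻¹ 0 0 0 := by
    simp [hf]
  -- eventually, the inverse of the block matrix equals f ((Sm m)⁻¹)
  have heq : ∀ᶠ m in atTop, (Matrix.fromBlocks A11 A12 A21 (H m))⁻¹ = f ((Sm m)⁻¹) := by
    have hev : ∀ᶠ m in atTop, ∀ k, B + 1 ≤ H m k k := by
      rw [eventually_all]
      intro k
      exact (hdiv k).eventually_ge_atTop _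
    filter_upwards [hev] with m hm
    have hSunit : IsUnit (Sm m).det :=
      (aux_inv_entry_bound (Sm m) one_pos (aux_quad_bound (H m) K (hdiag m) hm)).1
    haveI iA : Invertible A11 := A11.invertibleOfIsUnitDet h11
    haveI iS0 : Invertible (Sm m) := (Sm m).invertibleOfIsUnitDet hSunit
    have einv : ⅟A11 = A11⁻¹ := invOf_eq_nonsing_inv A11
    haveI iS : Invertible (H m - A21 * ⅟A11 * A12) := by rw [einv]; exact iS0
    haveI iAll : Invertible (Matrix.fromBlocks A11 A12 A21 (H m)) :=
      Matrix.fromBlocks₁₁Invertible A11 A12 A21 (H m)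
    have eS : ⅟(H m - A21 * ⅟A11 * A12) = (Sm m)⁻¹ := by
      rw [invOf_eq_nonsing_inv]
      congr 1
      rw [einv]
    rw [← invOf_eq_nonsing_inv, Matrix.invOf_fromBlocks₁₁_eq, hf]
    rw [eS, einv]
  intro q r
  have : Tendsto (fun m => (Matrix.fromBlocks A11 A12 A21 (H m))⁻¹) atTop
      (nhds (Matrix.fromBlocks A11⁻¹ 0 0 0)) := by
    rw [← hf0]
    exact hflim.congr' (heq.mono fun m hm => hm.symm)
  have h1 := (tendsto_pi_nhds.mp this) q
  exact (tendsto_pi_nhds.mp h1) r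
end
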